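/- arXiv:1410.6493 — 2 statements merged into one kernel-verified Lean document; each statement's English description precedes it below -/
import Mathlib

section
/- For real q > 0 with q ≠ 1 and nonzero real numbers a, b, setting A(t) = (q − q^{−1})/(q^{−2t} − 1), one has −q^{b−a}·A(a) + [a−b]_q·A(a)·A(b) + q^{a−b}·A(b) = 0, where [t]_q = (q^t − q^{−t})/(q − q^{−1}). -/
/-- Quantum number `[t]_q = (q^t - q^{-t})/(q - q⁻¹)` for real `q > 0`. -/
noncomputable def qnum (q t : ℝ) : ℝ := (q ^ t - q ^ (-t)) / (q - q⁻¹)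

/-- The Cartan coefficient `A(t) = (q - q⁻¹)/(q^{-2t} - 1)`. -/
noncomputable def Acoef (q t : ℝ) : ℝ := (q - q⁻¹) / (q ^ (-(2 * t)) - 1)

lemma key (X Y d : ℝ) (hX : X ≠ 0) (hY : Y ≠ 0) (hd : d ≠ 0)
    (h1 : 1 - X * X ≠ 0) (h2 : 1 - Y * Y ≠ 0) :
    -(Y * X⁻¹) * (d * (X * X) / (1 - X * X))
      + ((X * Y⁻¹ - Y * X⁻¹) / d) * (d * (X * X) / (1 - X * X)) * (d * (Y * Y) / (1 - Y * Y))
      + (X * Y⁻¹) * (d * (Y * Y) / (1 - Y * Y)) = 0 := by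
  have h1' : 1 - X ^ 2 ≠ 0 := by rwa [sq]
  have h2' : 1 - Y ^ 2 ≠ 0 := by rwa [sq]
  field_simp
  ring

theorem three_chain_AA_lowering (q a b : ℝ) (hq : 0 < q) (hq1 : q ≠ 1)
    (ha : a ≠ 0) (hb : b ≠ 0) :
    -(q ^ (b - a)) * Acoef q a + qnum q (a - b) * Acoef q a * Acoef q b
      + q ^ (a - b) * Acoef q b = 0 := by
  have hq0 : q ≠ 0 := ne_of_gt hq
  have hlog : Real.log q ≠ 0 := Real.log_ne_zero_of_pos_of_ne_one hq hq1
  have hpow : ∀ t : ℝ, t ≠ 0 → q ^ t ≠ 1 := by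
    intro t ht h
    have h2 := Real.log_rpow hq t
    rw [h, Real.log_one] at h2
    rcases mul_eq_zero.mp h2.symm with h3 | h3
    · exact ht h3
    · exact hlog h3
  have hxa : q ^ a ≠ 0 := (Real.rpow_pos_of_pos hq a).ne'
  have hxb : q ^ b ≠ 0 := (Real.rpow_pos_of_pos hq b).ne'
  have hd : q - q⁻¹ ≠ 0 := by
    rw [sub_ne_zero]
    intro h
    have h2 : q * q = 1 := by field_simp at h; linarith
    have h3 : (q - 1) * (q + 1) = 0 := by ring_nf; linarith
    rcases mul_eq_zero.mp h3 with h4 | h4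
    · exact hq1 (by linarith)
    · linarith
  have erw : ∀ s t : ℝ, q ^ (s + t) = q ^ s * q ^ t := fun s t => Real.rpow_add hq s t
  have e1 : q ^ (b - a) = q ^ b * (q ^ a)⁻¹ := by
    rw [show b - a = b + -a by ring, erw, Real.rpow_neg hq.le]
  have e2 : q ^ (a - b) = q ^ a * (q ^ b)⁻¹ := by
    rw [show a - b = a + -b by ring, erw, Real.rpow_neg hq.le]
  have e2' : q ^ (-(a - b)) = q ^ b * (q ^ a)⁻¹ := by
    rw [show -(a - b) = b + -a by ring, erw, Real.rpow_neg hq.le]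
  have hsq : ∀ t : ℝ, t ≠ 0 → 1 - q ^ t * q ^ t ≠ 0 := by
    intro t ht h
    have h4 : q ^ t * q ^ t = q ^ (t + t) := (erw t t).symm
    rw [h4] at h
    exact hpow (t + t) (by intro h2; exact ht (by linarith)) (by linarith)
  have hA : ∀ t : ℝ, t ≠ 0 →
      Acoef q t = (q - q⁻¹) * (q ^ t * q ^ t) / (1 - q ^ t * q ^ t) := by
    intro t ht
    have e3 : q ^ (-(2 * t)) = (q ^ t)⁻¹ * (q ^ t)⁻¹ := by
      rw [show -(2 * t) = -t + -t by ring, erw, Real.rpow_neg hq.le]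
    have hxt : q ^ t ≠ 0 := (Real.rpow_pos_of_pos hq t).ne'
    have e5 : (q ^ t)⁻¹ * (q ^ t)⁻¹ - 1 = (1 - q ^ t * q ^ t) / (q ^ t * q ^ t) := by
      field_simp
    rw [Acoef, e3, e5, div_div_eq_mul_div]
  rw [hA a ha, hA b hb, qnum, e1, e2, e2']
  exact key _ _ _ hxa hxb hd (hsq a ha) (hsq b hb)
end

section
/- Fix n ≥ 2, N = 2n+1, and write i' = N+1−i. Let q be an invertible element of a commutative ring. In the N×N matrix algebra, let F_{n−1} = e_{n,n−1} + e_{(n−1)',(n−1)'−1} = e_{n,n−1} + e_{n+3,n+2} and F_n = e_{n+1,n} + e_{n',n'−1} = e_{n+1,n} + e_{n+2,n+1}. Then F_n³·F_{n−1} − (q + 1 + q^{−1})·F_n²·F_{n−1}·F_n + (q + 1 + q^{−1})·F_n·F_{n−1}·F_n² − F_{n−1}·F_n³ = 0. -/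
open Matrix

/-- The matrix unit `e_{ab}` in `N×N` matrices over a commutative ring `R`,
with 1-based indices `a, b`; zero if the indices are out of range. -/
def matUnit (N : ℕ) (R : Type*) [CommRing R] [DecidableEq R] (a b : ℕ) :
    Matrix (Fin N) (Fin N) R :=
  if h : 1 ≤ a ∧ a ≤ N ∧ 1 ≤ b ∧ b ≤ N then
    Matrix.single ⟨a - 1, by omega⟩ ⟨b - 1, by omega⟩ 1
  else 0

lemma matUnit_mul_same {N : ℕ} {R : Type*} [CommRing R] [DecidableEq R]
    {a b d : ℕ} (ha : 1 ≤ a ∧ a ≤ N) (hb : 1 ≤ b ∧ b ≤ N) (hd : 1 ≤ d ∧ d ≤ N) :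
    matUnit N R a b * matUnit N R b d = matUnit N R a d := by
  rw [matUnit, matUnit, matUnit, dif_pos ⟨ha.1, ha.2, hb.1, hb.2⟩,
    dif_pos ⟨hb.1, hb.2, hd.1, hd.2⟩, dif_pos ⟨ha.1, ha.2, hd.1, hd.2⟩,
    Matrix.single_mul_single_same, one_mul]

lemma matUnit_mul_ne {N : ℕ} {R : Type*} [CommRing R] [DecidableEq R]
    {a b c d : ℕ} (hbc : 1 ≤ b → 1 ≤ c → b ≠ c) :
    matUnit N R a b * matUnit N R c d = 0 := by
  rw [matUnit, matUnit]
  split_ifs with h1 h2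
  · rw [Matrix.single_mul_single_of_ne]
    intro h
    have := Fin.mk.inj_iff.mp h
    exact hbc h1.2.2.1 h2.1 (by omega)
  all_goals simp

theorem modified_qSerre_natural_rep (n : ℕ) (hn : 2 ≤ n)
    (R : Type*) [CommRing R] [DecidableEq R]
    (N : ℕ) (hN : N = 2 * n + 1)
    (q : Rˣ)
    (Fnm1 Fn : Matrix (Fin N) (Fin N) R)
    (hFnm1 : Fnm1 = matUnit N R n (n - 1) + matUnit N R (n + 3) (n + 2))
    (hFn : Fn = matUnit N R (n + 1) n + matUnit N R (n + 2) (n + 1)) :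
    Fn ^ 3 * Fnm1 - ((q : R) + 1 + ((q⁻¹ : Rˣ) : R)) • (Fn ^ 2 * Fnm1 * Fn)
      + ((q : R) + 1 + ((q⁻¹ : Rˣ) : R)) • (Fn * Fnm1 * Fn ^ 2)
      - Fnm1 * Fn ^ 3 = 0 := by
  subst hFnm1 hFn
  simp (disch := omega) only [pow_succ, pow_zero, one_mul, add_mul, mul_add,
    matUnit_mul_same, matUnit_mul_ne, add_zero, zero_add, mul_zero, zero_mul,
    smul_zero, sub_zero, sub_self, zero_sub, neg_zero]
end
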